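/- For real numbers A, B, C > 0, define F(A,B,C) as the infimum over all pairs of finite sequences (a_1,…,a_ℓ), (b_1,…,b_ℓ) of nonnegative reals with Σa_i = A, Σb_i = B, and a_i + b_i ≤ C for each i, of the quantity Σ_{i ≠ j} a_i b_j. Then F(A,B,C) is monotone nondecreasing in A and in B, and nonincreasing in C; and for any B ≥ B' > 0, (B'/B)·F(A,B,C) ≥ F(A,B',C). -/

import Mathlib

/-- `F(A,B,C)`: the infimum, over pairs of finite sequences of nonnegative reals with
`Σaᵢ = A`, `Σbᵢ = B` and `aᵢ + bᵢ ≤ C`, of `Σ_{i≠j} aᵢ bⱼ`. -/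
noncomputable def Fcomp (A B C : ℝ) : ℝ :=
  sInf {t : ℝ | ∃ (ℓ : ℕ) (a b : Fin ℓ → ℝ),
    (∀ i, 0 ≤ a i) ∧ (∀ i, 0 ≤ b i) ∧ (∑ i, a i) = A ∧ (∑ i, b i) = B ∧
    (∀ i, a i + b i ≤ C) ∧
    t = ∑ i, ∑ j ∈ Finset.univ \ {i}, a i * b j}

def Fset (A B C : ℝ) : Set ℝ :=
  {t : ℝ | ∃ (ℓ : ℕ) (a b : Fin ℓ → ℝ),
    (∀ i, 0 ≤ a i) ∧ (∀ i, 0 ≤ b i) ∧ (∑ i, a i) = A ∧ (∑ i, b i) = B ∧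
    (∀ i, a i + b i ≤ C) ∧
    t = ∑ i, ∑ j ∈ Finset.univ \ {i}, a i * b j}

lemma Fcomp_eq (A B C : ℝ) : Fcomp A B C = sInf (Fset A B C) := rfl

lemma Fset_nonneg {A B C t : ℝ} (ht : t ∈ Fset A B C) : 0 ≤ t := by
  obtain ⟨ℓ, a, b, ha, hb, -, -, -, rfl⟩ := ht
  exact Finset.sum_nonneg fun i _ =>
    Finset.sum_nonneg fun j _ => mul_nonneg (ha i) (hb j)

lemma Fset_bddBelow (A B C : ℝ) : BddBelow (Fset A B C) :=
  ⟨0, fun _ ht => Fset_nonneg ht⟩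

lemma Fset_nonempty {A B C : ℝ} (hA : 0 < A) (hB : 0 < B) (hC : 0 < C) :
    (Fset A B C).Nonempty := by
  set n := ⌈(A + B) / C⌉₊ with hn
  have hpos : 0 < (A + B) / C := by positivity
  have hn1 : 0 < n := Nat.ceil_pos.mpr hpos
  have hnpos : (0 : ℝ) < n := by exact_mod_cast hn1
  refine ⟨_, n, (fun _ => A / n), (fun _ => B / n), fun i => by positivity,
    fun i => by positivity, ?_, ?_, ?_, rfl⟩
  · rw [Finset.sum_const, Finset.card_univ, Fintype.card_fin, nsmul_eq_mul,
      mul_div_cancel₀ _ (ne_of_gt hnpos)]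
  · rw [Finset.sum_const, Finset.card_univ, Fintype.card_fin, nsmul_eq_mul,
      mul_div_cancel₀ _ (ne_of_gt hnpos)]
  · intro i
    have h1 : (A + B) / C ≤ (n : ℝ) := Nat.le_ceil _
    have h2 : A + B ≤ (n : ℝ) * C := (div_le_iff₀ hC).mp h1
    rw [← add_div, div_le_iff₀ hnpos]
    linarith [h2]

lemma Fset_scale_a {A B C t : ℝ} (ht : t ∈ Fset A B C) {c : ℝ}
    (hc0 : 0 ≤ c) (hc1 : c ≤ 1) : c * t ∈ Fset (c * A) B C := by
  obtain ⟨ℓ, a, b, ha, hb, hsa, hsb, hab, rfl⟩ := ht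
  refine ⟨ℓ, fun i => c * a i, b, fun i => mul_nonneg hc0 (ha i), hb, ?_, hsb, ?_, ?_⟩
  · rw [← Finset.mul_sum, hsa]
  · intro i
    have h := hab i
    have h2 : c * a i ≤ a i := by nlinarith [ha i]
    show c * a i + b i ≤ C
    linarith
  · rw [Finset.mul_sum]
    refine Finset.sum_congr rfl fun i _ => ?_
    rw [Finset.mul_sum]
    exact Finset.sum_congr rfl fun j _ => by ring

lemma Fset_scale_b {A B C t : ℝ} (ht : t ∈ Fset A B C) {c : ℝ}
    (hc0 : 0 ≤ c) (hc1 : c ≤ 1) : c * t ∈ Fset A (c * B) C := by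
  obtain ⟨ℓ, a, b, ha, hb, hsa, hsb, hab, rfl⟩ := ht
  refine ⟨ℓ, a, fun i => c * b i, ha, fun i => mul_nonneg hc0 (hb i), hsa, ?_, ?_, ?_⟩
  · rw [← Finset.mul_sum, hsb]
  · intro i
    have h := hab i
    have h2 : c * b i ≤ b i := by nlinarith [hb i]
    show a i + c * b i ≤ C
    linarith
  · rw [Finset.mul_sum]
    refine Finset.sum_congr rfl fun i _ => ?_
    rw [Finset.mul_sum]
    exact Finset.sum_congr rfl fun j _ => by ring

/-- `F(A,B,C)` is nondecreasing in `A` and in `B`, nonincreasing in `C`, and satisfies the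
scaling inequality `(B'/B)·F(A,B,C) ≥ F(A,B',C)` for `0 < B' ≤ B`. -/
theorem stmt_9 (A B C : ℝ) (hA : 0 < A) (hB : 0 < B) (hC : 0 < C) :
    (∀ A' : ℝ, A ≤ A' → Fcomp A B C ≤ Fcomp A' B C) ∧
    (∀ B' : ℝ, B ≤ B' → Fcomp A B C ≤ Fcomp A B' C) ∧
    (∀ C' : ℝ, C ≤ C' → Fcomp A B C' ≤ Fcomp A B C) ∧
    (∀ B' : ℝ, 0 < B' → B' ≤ B → Fcomp A B' C ≤ (B' / B) * Fcomp A B C) := by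
  refine ⟨?_, ?_, ?_, ?_⟩
  · intro A' hAA'
    have hA' : 0 < A' := lt_of_lt_of_le hA hAA'
    rw [Fcomp_eq, Fcomp_eq]
    refine le_csInf (Fset_nonempty hA' hB hC) fun t ht => ?_
    have hc0 : (0 : ℝ) ≤ A / A' := by positivity
    have hc1 : A / A' ≤ 1 := (div_le_one hA').mpr hAA'
    have hmem := Fset_scale_a ht hc0 hc1
    rw [div_mul_cancel₀ _ (ne_of_gt hA')] at hmem
    calc sInf (Fset A B C) ≤ A / A' * t := csInf_le (Fset_bddBelow _ _ _) hmem
      _ ≤ 1 * t := mul_le_mul_of_nonneg_right hc1 (Fset_nonneg ht)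
      _ = t := one_mul t
  · intro B' hBB'
    have hB' : 0 < B' := lt_of_lt_of_le hB hBB'
    rw [Fcomp_eq, Fcomp_eq]
    refine le_csInf (Fset_nonempty hA hB' hC) fun t ht => ?_
    have hc0 : (0 : ℝ) ≤ B / B' := by positivity
    have hc1 : B / B' ≤ 1 := (div_le_one hB').mpr hBB'
    have hmem := Fset_scale_b ht hc0 hc1
    rw [div_mul_cancel₀ _ (ne_of_gt hB')] at hmem
    calc sInf (Fset A B C) ≤ B / B' * t := csInf_le (Fset_bddBelow _ _ _) hmem
      _ ≤ 1 * t := mul_le_mul_of_nonneg_right hc1 (Fset_nonneg ht)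
      _ = t := one_mul t
  · intro C' hCC'
    rw [Fcomp_eq, Fcomp_eq]
    refine csInf_le_csInf (Fset_bddBelow _ _ _) (Fset_nonempty hA hB hC) ?_
    rintro t ⟨ℓ, a, b, ha, hb, hsa, hsb, hab, rfl⟩
    exact ⟨ℓ, a, b, ha, hb, hsa, hsb, fun i => le_trans (hab i) hCC', rfl⟩
  · intro B' hB' hB'B
    have hr : (0 : ℝ) < B' / B := by positivity
    have hkey : (B / B') * Fcomp A B' C ≤ sInf (Fset A B C) := by
      refine le_csInf (Fset_nonempty hA hB hC) fun t ht => ?_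
      have hc0 : (0 : ℝ) ≤ B' / B := le_of_lt hr
      have hc1 : B' / B ≤ 1 := (div_le_one hB).mpr hB'B
      have hmem := Fset_scale_b ht hc0 hc1
      rw [div_mul_cancel₀ _ (ne_of_gt hB)] at hmem
      have h1 : Fcomp A B' C ≤ B' / B * t := csInf_le (Fset_bddBelow _ _ _) hmem
      have hBB' : (0 : ℝ) < B / B' := by positivity
      calc B / B' * Fcomp A B' C ≤ B / B' * (B' / B * t) :=
            mul_le_mul_of_nonneg_left h1 hBB'.le
        _ = t := by field_simp
    rw [Fcomp_eq A B C]
    calc Fcomp A B' C = B' / B * (B / B' * Fcomp A B' C) := by field_simp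
      _ ≤ B' / B * sInf (Fset A B C) := mul_le_mul_of_nonneg_left hkey hr.le
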